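/- Given a Schottky datum with r ≥ 1 generators, the group homomorphism from the free group on r generators to SL(2,ℝ) sending the i-th generator to S_i is injective; that is, S₁, …, S_r freely generate a free subgroup of SL(2,ℝ). -/

import Mathlib

/-- A Schottky datum with `r ≥ 1` generators: pairwise disjoint closed disks
`D̄ j = {z : dist z (center j) ≤ radius j}` (for `j ∈ ℤ/2rℤ`) centered on the real axis,
together with matrices `gen j ∈ SL(2,ℝ)` satisfying `gen (j + r) = (gen j)⁻¹`, such that for
each `j` the Möbius transformation of `gen j` is defined on all of `ℂ ∖ D j` (the complement
of the open disk) and maps it into the open disk `D (j + r)`. -/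
structure SchottkyDatum (r : ℕ) where
  center : ZMod (2 * r) → ℝ
  radius : ZMod (2 * r) → ℝ
  radius_pos : ∀ j, 0 < radius j
  disks_disjoint : ∀ i j, i ≠ j → ∀ z : ℂ,
    dist z (center i : ℂ) ≤ radius i → ¬ dist z (center j : ℂ) ≤ radius j
  gen : ZMod (2 * r) → Matrix.SpecialLinearGroup (Fin 2) ℝ
  gen_add_r : ∀ j, gen (j + (r : ZMod (2 * r))) = (gen j)⁻¹
  denom_ne_zero : ∀ j, ∀ z : ℂ, ¬ dist z (center j : ℂ) < radius j →
    (((gen j : Matrix (Fin 2) (Fin 2) ℝ) 1 0 : ℂ) * z +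
        ((gen j : Matrix (Fin 2) (Fin 2) ℝ) 1 1 : ℂ)) ≠ 0
  maps_into : ∀ j, ∀ z : ℂ, ¬ dist z (center j : ℂ) < radius j →
    dist
        ((((gen j : Matrix (Fin 2) (Fin 2) ℝ) 0 0 : ℂ) * z +
            ((gen j : Matrix (Fin 2) (Fin 2) ℝ) 0 1 : ℂ)) /
          (((gen j : Matrix (Fin 2) (Fin 2) ℝ) 1 0 : ℂ) * z +
            ((gen j : Matrix (Fin 2) (Fin 2) ℝ) 1 1 : ℂ)))
        ((center (j + (r : ZMod (2 * r))) : ℂ)) <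
      radius (j + (r : ZMod (2 * r)))

/-- The element `T_σ = S_{σ(0)} S_{σ(1)} ⋯ S_{σ(n-1)}` associated to a word
`σ : ℤ/nℤ → ℤ/2rℤ`. -/
def Tword {r : ℕ} (D : SchottkyDatum r) {n : ℕ} (σ : ZMod n → ZMod (2 * r)) :
    Matrix.SpecialLinearGroup (Fin 2) ℝ :=
  ((List.finRange n).map fun i => D.gen (σ ((i : ℕ) : ZMod n))).prod

/-! ### Auxiliary definitions and lemmas for the ping-pong argument -/

/-- Numerator of the Möbius transformation of `M` at `z`. -/
noncomputable def mnum (M : Matrix.SpecialLinearGroup (Fin 2) ℝ) (z : ℂ) : ℂ :=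
  ((M : Matrix (Fin 2) (Fin 2) ℝ) 0 0 : ℂ) * z + ((M : Matrix (Fin 2) (Fin 2) ℝ) 0 1 : ℂ)

/-- Denominator of the Möbius transformation of `M` at `z`. -/
noncomputable def mden (M : Matrix.SpecialLinearGroup (Fin 2) ℝ) (z : ℂ) : ℂ :=
  ((M : Matrix (Fin 2) (Fin 2) ℝ) 1 0 : ℂ) * z + ((M : Matrix (Fin 2) (Fin 2) ℝ) 1 1 : ℂ)

/-- The Möbius transformation of `M` at `z`. -/
noncomputable def mob (M : Matrix.SpecialLinearGroup (Fin 2) ℝ) (z : ℂ) : ℂ :=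
  mnum M z / mden M z

lemma mnum_mul (A B : Matrix.SpecialLinearGroup (Fin 2) ℝ) (z : ℂ) (hB : mden B z ≠ 0) :
    mnum (A * B) z = mnum A (mob B z) * mden B z := by
  simp only [mnum, mden, mob] at *
  simp only [Matrix.SpecialLinearGroup.coe_mul, Matrix.mul_apply, Fin.sum_univ_two]
  push_cast
  field_simp
  ring

lemma mden_mul (A B : Matrix.SpecialLinearGroup (Fin 2) ℝ) (z : ℂ) (hB : mden B z ≠ 0) :
    mden (A * B) z = mden A (mob B z) * mden B z := by
  simp only [mnum, mden, mob] at *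
  simp only [Matrix.SpecialLinearGroup.coe_mul, Matrix.mul_apply, Fin.sum_univ_two]
  push_cast
  field_simp
  ring

lemma mob_mul (A B : Matrix.SpecialLinearGroup (Fin 2) ℝ) (z : ℂ) (hB : mden B z ≠ 0) :
    mob (A * B) z = mob A (mob B z) := by
  rw [mob, mnum_mul A B z hB, mden_mul A B z hB, mul_div_mul_right _ _ hB]; rfl

lemma mob_one (z : ℂ) : mob 1 z = z := by
  simp [mob, mnum, mden, Matrix.SpecialLinearGroup.coe_one, Matrix.one_apply]

/-- Reducedness, extracted as a chain condition. -/
lemma chain'_of_noPair {α : Type*} : ∀ (L : List (α × Bool)),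
    (∀ (L₂ L₃ : List (α × Bool)) (x : α) (b : Bool), L ≠ L₂ ++ (x, b) :: (x, !b) :: L₃) →
    List.Chain' (fun p q : α × Bool => ¬(p.1 = q.1 ∧ q.2 = !p.2)) L
  | [], _ => List.isChain_nil
  | [_], _ => List.isChain_singleton _
  | a :: c :: t, H => by
    rw [List.Chain', List.isChain_cons_cons]
    constructor
    · rintro ⟨h1, h2⟩
      exact H [] t a.1 a.2 (by
        have : c = (a.1, !a.2) := Prod.ext h1.symm h2
        simp [this])
    · exact chain'_of_noPair (c :: t) (fun L₂ L₃ x b h => H (a :: L₂) L₃ x b (by simp [h]))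

lemma toWord_chain {α : Type*} [DecidableEq α] (x : FreeGroup α) :
    List.Chain' (fun p q : α × Bool => ¬(p.1 = q.1 ∧ q.2 = !p.2)) x.toWord := by
  apply chain'_of_noPair
  intro L₂ L₃ i b h
  exact FreeGroup.reduce.not (p := False) (by rw [x.reduce_toWord, h])

lemma r_add_r {r : ℕ} : (r : ZMod (2 * r)) + r = 0 := by
  have : ((2 * r : ℕ) : ZMod (2 * r)) = 0 := ZMod.natCast_self _
  push_cast [two_mul] at this
  exact this

/-- The ping-pong lemma: the Möbius transformation of a reduced word moves a point outside
all the closed disks into the open disk indexed by the first letter (plus `r`). -/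
lemma key {r : ℕ} (D : SchottkyDatum r) {z : ℂ}
    (hz : ∀ j, ¬ dist z (D.center j : ℂ) ≤ D.radius j) :
    ∀ (L : List (ZMod (2 * r))) (j : ZMod (2 * r)),
      List.Chain (fun a b => b ≠ a + (r : ZMod (2 * r))) j L →
      mden (((j :: L).map D.gen).prod) z ≠ 0 ∧
        dist (mob (((j :: L).map D.gen).prod) z)
          (D.center (j + (r : ZMod (2 * r))) : ℂ) < D.radius (j + (r : ZMod (2 * r)))
  | [], j, _ => by
    have hzj : ¬ dist z (D.center j : ℂ) < D.radius j := fun h => hz j h.le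
    refine ⟨?_, ?_⟩
    · simpa [mden] using D.denom_ne_zero j z hzj
    · simpa [mob, mnum, mden] using D.maps_into j z hzj
  | k :: L, j, hchain => by
    rw [List.Chain, List.isChain_cons_cons] at hchain
    obtain ⟨hk, hchain⟩ := hchain
    obtain ⟨hden, hdist⟩ := key D hz L k hchain
    set P := ((k :: L).map D.gen).prod with hP
    set w := mob P z with hw
    have hjk : j ≠ k + (r : ZMod (2 * r)) := by
      intro h
      apply hk
      rw [h, add_assoc, r_add_r, add_zero]
    have hwj : ¬ dist w (D.center j : ℂ) ≤ D.radius j :=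
      D.disks_disjoint _ _ (Ne.symm hjk) w hdist.le
    have hwj' : ¬ dist w (D.center j : ℂ) < D.radius j := fun h => hwj h.le
    have hdenj : mden (D.gen j) w ≠ 0 := by simpa [mden] using D.denom_ne_zero j w hwj'
    have hprod : ((j :: k :: L).map D.gen).prod = D.gen j * P := by simp [hP]
    constructor
    · rw [hprod, mden_mul _ _ _ hden]
      exact mul_ne_zero hdenj hden
    · rw [hprod, mob_mul _ _ _ hden]
      exact D.maps_into j w hwj'

/-- Given a Schottky datum with `r ≥ 1` generators, the homomorphism from the free group on
`r` generators to `SL(2,ℝ)` sending the `i`-th generator to `S i` is injective; that is, the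
generators freely generate a free subgroup of `SL(2,ℝ)`. -/
theorem stmt8 (r : ℕ) (hr : 1 ≤ r) (D : SchottkyDatum r) :
    Function.Injective
      (FreeGroup.lift fun i : Fin r => D.gen ((i : ℕ) : ZMod (2 * r))) := by
  haveI : NeZero (2 * r) := ⟨by omega⟩
  -- the letter-to-index map
  set φ : Fin r × Bool → ZMod (2 * r) :=
    fun p => (((p.1 : ℕ) + if p.2 then 0 else r : ℕ) : ZMod (2 * r)) with hφ
  have hφinj : Function.Injective φ := by
    intro p q h
    have hlt : ∀ s : Fin r × Bool, (s.1 : ℕ) + (if s.2 then 0 else r) < 2 * r := by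
      intro s
      have := s.1.isLt
      split <;> omega
    have hval := congrArg ZMod.val h
    rw [hφ] at hval
    simp only [ZMod.val_cast_of_lt (hlt p), ZMod.val_cast_of_lt (hlt q)] at hval
    have h1 : (p.1 : ℕ) = q.1 ∧ p.2 = q.2 := by
      have hp := p.1.isLt; have hq := q.1.isLt
      rcases p with ⟨p1, _ | _⟩ <;> rcases q with ⟨q1, _ | _⟩ <;>
        simp_all <;> omega
    exact Prod.ext (Fin.ext h1.1) h1.2
  have hφflip : ∀ p : Fin r × Bool, φ (p.1, !p.2) = φ p + (r : ZMod (2 * r)) := by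
    intro ⟨i, b⟩
    cases b <;> simp [hφ] <;> push_cast <;>
      rw [add_assoc, r_add_r, add_zero]
  -- the base point outside all closed disks
  set t : ℝ := 1 + ∑ j, |D.radius j| with ht
  set z : ℂ := (t : ℂ) * Complex.I with hz0
  have hz : ∀ j, ¬ dist z (D.center j : ℂ) ≤ D.radius j := by
    intro j hle
    have h1 : |D.radius j| ≤ ∑ i, |D.radius i| :=
      Finset.single_le_sum (fun i _ => abs_nonneg (D.radius i)) (Finset.mem_univ j)
    have h2 : t ≤ dist z (D.center j : ℂ) := by
      have him : (z - (D.center j : ℂ)).im = t := by simp [hz0]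
      have := Complex.abs_im_le_norm (z - (D.center j : ℂ))
      rw [him] at this
      calc t ≤ |t| := le_abs_self t
        _ ≤ ‖z - (D.center j : ℂ)‖ := this
        _ = dist z (D.center j : ℂ) := (Complex.dist_eq _ _).symm
    have h3 : D.radius j < t := by
      have := le_abs_self (D.radius j)
      rw [ht]; linarith
    linarith
  rw [injective_iff_map_eq_one]
  intro w hw
  by_contra hne
  have hLne : w.toWord ≠ [] := fun h => hne (FreeGroup.toWord_eq_nil_iff.mp h)
  obtain ⟨p, tl, hL⟩ := List.exists_cons_of_ne_nil hLne
  -- rewrite the lift as a product of generators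
  have hwprod : FreeGroup.lift (fun i : Fin r => D.gen ((i : ℕ) : ZMod (2 * r))) w =
      ((w.toWord.map φ).map D.gen).prod := by
    conv_lhs => rw [← FreeGroup.mk_toWord (x := w)]
    rw [FreeGroup.lift_mk, List.map_map]
    congr 1
    apply List.map_congr_left
    intro ⟨i, b⟩ _
    cases b <;> simp [hφ, Function.comp]
    · push_cast
      exact (D.gen_add_r _).symm
  -- the chain condition on the mapped word
  have hchain' : List.Chain' (fun a b => b ≠ a + (r : ZMod (2 * r))) (w.toWord.map φ) := by
    rw [List.Chain', List.isChain_map]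
    apply List.IsChain.imp ?_ (toWord_chain w)
    intro a b hab hEq
    apply hab
    have : φ b = φ (a.1, !a.2) := by rw [hφflip a]; exact hEq
    have hba := hφinj this
    exact ⟨congrArg Prod.fst hba.symm ▸ rfl, congrArg Prod.snd hba⟩
  rw [hL, List.map_cons] at hwprod hchain'
  have hchain : List.Chain (fun a b => b ≠ a + (r : ZMod (2 * r))) (φ p) (tl.map φ) := hchain'
  obtain ⟨-, hdist⟩ := key D hz (tl.map φ) (φ p) hchain
  rw [← hwprod, hw, mob_one] at hdist
  exact hz _ hdist.le
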